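/- arXiv:1506.01606 — 4 statements merged into one kernel-verified Lean document; each statement's English description precedes it below -/
import Mathlib

section
/- Let P₁, P₂ be positive integers, a = 2π/P₁, b = 2π/P₂, and set k̃ = P₁ + P₂ + 1. For any integers t and k with k ≥ k̃, and for every l with 1 ≤ l ≤ k-1, the product ∏_{f=1}^{k-2} sin(c_{lf}(t - f - δ_{lf})) equals 0, where c_{lf}=a, δ_{lf}=0 if l+f ≤ k-1 and c_{lf}=b, δ_{lf}=1 if l+f > k-1. -/
open Real in
lemma sin_two_pi_div_mul_eq_zero (P : ℕ) (hP : 0 < P) (x : ℤ) (h : (P : ℤ) ∣ x) :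
    Real.sin (2 * π / (P : ℝ) * (x : ℝ)) = 0 := by
  obtain ⟨m, rfl⟩ := h
  have hP' : (P : ℝ) ≠ 0 := by positivity
  have : 2 * π / (P : ℝ) * (((P : ℤ) * m : ℤ) : ℝ) = ((2 * m : ℤ) : ℝ) * π := by
    push_cast; field_simp
  rw [this]
  exact Real.sin_int_mul_pi _

open Real in
/-- With integer periods `P₁, P₂`, `a = 2π/P₁`, `b = 2π/P₂`, `k̃ = P₁+P₂+1`: for all integers
`t` and all `k ≥ k̃`, `1 ≤ l ≤ k-1`, the product `∏_{f=1}^{k-2} sin(c_{lf}(t-f-δ_{lf}))`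
vanishes, where `c_{lf} = a, δ_{lf} = 0` if `l+f ≤ k-1` and `c_{lf} = b, δ_{lf} = 1`
otherwise. -/
theorem prod_sin_eq_zero (P₁ P₂ : ℕ) (hP₁ : 0 < P₁) (hP₂ : 0 < P₂)
    (t : ℤ) (k l : ℕ) (hk : P₁ + P₂ + 1 ≤ k) (hl1 : 1 ≤ l) (hl2 : l ≤ k - 1) :
    ∏ f ∈ Finset.Icc 1 (k - 2),
      Real.sin ((if l + f ≤ k - 1 then 2 * π / (P₁ : ℝ) else 2 * π / (P₂ : ℝ)) *
        ((t : ℝ) - (f : ℝ) - (if l + f ≤ k - 1 then 0 else 1))) = 0 := by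
  by_cases hcase : l + P₁ ≤ k - 1
  · -- use f ≡ t (mod P₁), 1 ≤ f ≤ P₁
    set r : ℕ := ((t - 1).emod P₁).toNat with hr
    have hrlt : r < P₁ := by
      have h1 : (t - 1).emod P₁ < (P₁ : ℤ) := Int.emod_lt_of_pos _ (by exact_mod_cast hP₁)
      omega
    have hrnn : (0 : ℤ) ≤ (t - 1).emod P₁ := Int.emod_nonneg _ (by exact_mod_cast hP₁.ne')
    have hrcast : (r : ℤ) = (t - 1).emod P₁ := Int.toNat_of_nonneg hrnn
    set f : ℕ := r + 1 with hf
    apply Finset.prod_eq_zero (i := f)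
    · simp only [Finset.mem_Icc]; omega
    · have hif : l + f ≤ k - 1 := by omega
      rw [if_pos hif, if_pos hif]
      have hdvd : (P₁ : ℤ) ∣ (t - f) := by
        have h2 : (P₁ : ℤ) ∣ ((t - 1) - (t - 1).emod P₁) :=
          Dvd.intro ((t - 1) / P₁) (by show (P₁:ℤ) * ((t-1)/P₁) = (t-1) - (t-1) % P₁; rw [Int.emod_def]; ring)
        have : (t - (f : ℤ)) = (t - 1) - (t - 1).emod P₁ := by
          push_cast [hf, hrcast]; ring
        rw [this]; exact h2
      have : (t : ℝ) - (f : ℝ) - 0 = ((t - (f : ℤ) : ℤ) : ℝ) := by push_cast; ring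
      rw [this]
      exact sin_two_pi_div_mul_eq_zero P₁ hP₁ _ hdvd
  · -- use f ≡ t - 1 (mod P₂), k - l ≤ f ≤ k - l + P₂ - 1
    have hlge : P₂ + 1 ≤ l := by omega
    set s : ℤ := t - 1 - (k - l : ℕ) with hs
    set r : ℕ := (s.emod P₂).toNat with hr
    have hrlt : r < P₂ := by
      have h1 : s.emod P₂ < (P₂ : ℤ) := Int.emod_lt_of_pos _ (by exact_mod_cast hP₂)
      have hrnn : (0 : ℤ) ≤ s.emod P₂ := Int.emod_nonneg _ (by exact_mod_cast hP₂.ne')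
      omega
    have hrnn : (0 : ℤ) ≤ s.emod P₂ := Int.emod_nonneg _ (by exact_mod_cast hP₂.ne')
    have hrcast : (r : ℤ) = s.emod P₂ := Int.toNat_of_nonneg hrnn
    set f : ℕ := (k - l) + r with hf
    apply Finset.prod_eq_zero (i := f)
    · simp only [Finset.mem_Icc]; omega
    · have hif : ¬ (l + f ≤ k - 1) := by omega
      rw [if_neg hif, if_neg hif]
      have hdvd : (P₂ : ℤ) ∣ (t - f - 1) := by
        have h2 : (P₂ : ℤ) ∣ (s - s.emod P₂) := Dvd.intro (s / P₂) (by show (P₂:ℤ) * (s/P₂) = s - s % P₂; rw [Int.emod_def]; ring)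
        have : (t - (f : ℤ) - 1) = s - s.emod P₂ := by
          push_cast [hf, hrcast, hs]; ring
        rw [this]; exact h2
      have : (t : ℝ) - (f : ℝ) - 1 = ((t - (f : ℤ) - 1 : ℤ) : ℝ) := by push_cast; ring
      rw [this]
      exact sin_two_pi_div_mul_eq_zero P₂ hP₂ _ hdvd
end

section
/- In a tdVARMA(1,1) model x_t = A_t x_{t-1} + e_t + B_t e_{t-1} started with zero initial values, the coefficients of the pure moving average representation x_t = e_t + ∑_{k=1}^{t-1} ψ_{tk} e_{t-k} are given by ψ_{tk} = (∏_{l=0}^{k-2} A_{t-l})·(B_{t-k+1} + A_{t-k+1}) for k = 1,...,t-1, where the empty product (l from 0 to -1) is the identity matrix. -/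
open Matrix
/-- Pure moving average representation of a tdVARMA(1,1) model started with zero
initial values: `ψ_{tk} = (∏_{l=0}^{k-2} A_{t-l})(B_{t-k+1} + A_{t-k+1})`. -/
theorem tdVARMA_pure_MA (r : ℕ) (A B : ℤ → Matrix (Fin r) (Fin r) ℝ)
    (x e : ℤ → Fin r → ℝ)
    (hinit : ∀ t : ℤ, t < 1 → x t = 0 ∧ e t = 0)
    (hmodel : ∀ t : ℤ, 1 ≤ t →
      x t = A t *ᵥ x (t - 1) + e t + B t *ᵥ e (t - 1)) :
    ∀ t : ℤ, 1 ≤ t →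
      x t = e t + ∑ k ∈ Finset.Icc (1 : ℤ) (t - 1),
        ((((List.range (k - 1).toNat).map (fun l => A (t - l))).prod) *
            (B (t - k + 1) + A (t - k + 1))) *ᵥ e (t - k) := by
  refine Int.le_induction ?_ ?_
  · -- base case t = 1
    rcases hinit 0 (by norm_num) with ⟨hx0, he0⟩
    have h := hmodel 1 le_rfl
    norm_num at h
    rw [hx0, he0] at h
    simp [h]
  · -- inductive step
    intro t ht ih
    have hx := hmodel (t + 1) (by linarith)
    have ht1 : (t : ℤ) + 1 - 1 = t := by ring
    rw [ht1] at hx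
    rw [hx, ih]
    have hsplit : Finset.Icc (1 : ℤ) (t + 1 - 1) =
        insert 1 ((Finset.Icc (1 : ℤ) (t - 1)).map
          ⟨fun j => j + 1, add_left_injective 1⟩) := by
      ext k
      simp only [Finset.mem_Icc, Finset.mem_insert, Finset.mem_map,
        Function.Embedding.coeFn_mk]
      constructor
      · rintro ⟨hk1, hk2⟩
        rcases eq_or_lt_of_le hk1 with h | h
        · exact Or.inl h.symm
        · exact Or.inr ⟨k - 1, ⟨by omega, by omega⟩, by ring⟩
      · rintro (rfl | ⟨j, ⟨hj1, hj2⟩, rfl⟩) <;> omega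
    have hnot : (1 : ℤ) ∉ (Finset.Icc (1 : ℤ) (t - 1)).map
        ⟨fun j => j + 1, add_left_injective 1⟩ := by
      simp only [Finset.mem_map, Finset.mem_Icc, Function.Embedding.coeFn_mk]
      rintro ⟨j, hj, hj1⟩
      omega
    rw [hsplit, Finset.sum_insert hnot, Finset.sum_map]
    simp only [Function.Embedding.coeFn_mk]
    have hterm : ∀ j ∈ Finset.Icc (1 : ℤ) (t - 1),
        ((((List.range (j + 1 - 1).toNat).map (fun l => A (t + 1 - l))).prod) *
            (B (t + 1 - (j + 1) + 1) + A (t + 1 - (j + 1) + 1))) *ᵥ e (t + 1 - (j + 1))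
        = A (t + 1) *ᵥ
          (((((List.range (j - 1).toNat).map (fun l => A (t - l))).prod) *
            (B (t - j + 1) + A (t - j + 1))) *ᵥ e (t - j)) := by
      intro j hj
      simp only [Finset.mem_Icc] at hj
      have h1 : (j + 1 - 1 : ℤ) = j := by ring
      have h2 : (j : ℤ).toNat = (j - 1).toNat + 1 := by omega
      have h3 : (t + 1 - (j + 1) : ℤ) = t - j := by ring
      have h4 : (t + 1 - (j + 1) + 1 : ℤ) = t - j + 1 := by ring
      rw [h1, h2, h3]
      simp only [List.pure_def, List.bind_eq_flatMap, ← List.map_eq_flatMap,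
        List.range_succ_eq_map, List.map_cons, List.map_map, List.prod_cons,
        Matrix.mulVec_mulVec]
      rw [← mul_assoc]
      have hmap : List.map ((fun l : ℤ => A (t + 1 - l)) ∘ Nat.cast ∘ Nat.succ)
            (List.range (j - 1).toNat)
          = List.map ((fun l : ℤ => A (t - l)) ∘ Nat.cast)
            (List.range (j - 1).toNat) := by
        apply List.map_congr_left
        intro n _
        simp only [Function.comp_apply]
        push_cast
        ring_nf
      rw [hmap]
      norm_num
    rw [Finset.sum_congr rfl hterm]
    have hψ1 : ((((List.range ((1 : ℤ) - 1).toNat).map (fun l => A (t + 1 - l))).prod) *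
        (B (t + 1 - 1 + 1) + A (t + 1 - 1 + 1))) *ᵥ e (t + 1 - 1)
        = (B (t + 1) + A (t + 1)) *ᵥ e t := by
      norm_num
    rw [hψ1]
    rw [Matrix.mulVec_add, Matrix.add_mulVec]
    rw [show (A (t + 1)) *ᵥ (∑ j ∈ Finset.Icc (1 : ℤ) (t - 1),
        ((((List.range (j - 1).toNat).map (fun l => A (t - l))).prod) *
            (B (t - j + 1) + A (t - j + 1))) *ᵥ e (t - j))
      = ∑ j ∈ Finset.Icc (1 : ℤ) (t - 1), A (t + 1) *ᵥ
        (((((List.range (j - 1).toNat).map (fun l => A (t - l))).prod) *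
            (B (t - j + 1) + A (t - j + 1))) *ᵥ e (t - j)) from
      map_sum (A (t + 1)).mulVecLin _ _]
    abel
end

section
/- In a tdVARMA(1,1) model with zero initial values, the coefficients of the pure autoregressive representation x_t = ∑_{k=1}^{t-1} π_{tk} x_{t-k} + e_t are π_{tk} = ((-1)^{k-1} ∏_{l=0}^{k-2} B_{t-l})·(A_{t-k+1} + B_{t-k+1}). -/
open Matrix

private lemma tdVARMA_aux (r : ℕ) (A B : ℤ → Matrix (Fin r) (Fin r) ℝ)
    (x e : ℤ → Fin r → ℝ)
    (hinit : ∀ t : ℤ, t < 1 → x t = 0 ∧ e t = 0)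
    (hmodel : ∀ t : ℤ, 1 ≤ t →
      x t = A t *ᵥ x (t - 1) + e t + B t *ᵥ e (t - 1)) :
    ∀ t : ℤ, 1 ≤ t →
      x t = (∑ k ∈ Finset.Icc (1 : ℤ) (t - 1),
        (((-1 : ℝ) ^ (k - 1).toNat •
            ((List.range (k - 1).toNat).map (fun l : ℕ => B (t - (l : ℤ)))).prod) *
            (A (t - k + 1) + B (t - k + 1))) *ᵥ x (t - k)) + e t := by
  intro t ht
  refine Int.le_induction
    (motive := fun t _ => x t = (∑ k ∈ Finset.Icc (1 : ℤ) (t - 1),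
      (((-1 : ℝ) ^ (k - 1).toNat •
          ((List.range (k - 1).toNat).map (fun l : ℕ => B (t - (l : ℤ)))).prod) *
          (A (t - k + 1) + B (t - k + 1))) *ᵥ x (t - k)) + e t) ?_ ?_ t ht
  ·
    have h0 : Finset.Icc (1 : ℤ) (1 - 1) = ∅ := by decide
    have h1 : (1 : ℤ) - 1 = 0 := by norm_num
    rw [hmodel 1 le_rfl, h0, h1, (hinit 0 (by norm_num)).1, (hinit 0 (by norm_num)).2]
    simp
  · intro t ht IH
    have he : e t = x t - ∑ k ∈ Finset.Icc (1 : ℤ) (t - 1),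
        (((-1 : ℝ) ^ (k - 1).toNat •
            ((List.range (k - 1).toNat).map (fun l : ℕ => B (t - (l : ℤ)))).prod) *
            (A (t - k + 1) + B (t - k + 1))) *ᵥ x (t - k) := by
      rw [IH]; abel
    have hx : x (t + 1) = A (t + 1) *ᵥ x t + e (t + 1) + B (t + 1) *ᵥ e t := by
      have := hmodel (t + 1) (by omega)
      simpa using this
    -- key recursion for coefficients
    have hkey : ∀ k : ℤ, 1 ≤ k →
        (((-1 : ℝ) ^ (k + 1 - 1).toNat •
            ((List.range (k + 1 - 1).toNat).map (fun l : ℕ => B (t + 1 - (l : ℤ)))).prod) *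
            (A (t + 1 - (k + 1) + 1) + B (t + 1 - (k + 1) + 1)))
        = -(B (t + 1) *
            (((-1 : ℝ) ^ (k - 1).toNat •
              ((List.range (k - 1).toNat).map (fun l : ℕ => B (t - (l : ℤ)))).prod) *
              (A (t - k + 1) + B (t - k + 1)))) := by
      intro k hk
      obtain ⟨n, hn1, hn2⟩ : ∃ n : ℕ, (k - 1).toNat = n ∧ (k + 1 - 1).toNat = n + 1 := by
        refine ⟨(k - 1).toNat, rfl, ?_⟩; omega
      rw [hn1, hn2, List.range_succ_eq_map, List.map_cons, List.prod_cons, List.map_map]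
      have harg : ((fun l : ℕ => B (t + 1 - (l : ℤ))) ∘ Nat.succ) = fun l : ℕ => B (t - (l : ℤ)) := by
        funext l
        simp only [Function.comp]
        push_cast
        ring_nf
      have harg2 : t + 1 - (k + 1) + 1 = t - k + 1 := by ring
      have harg3 : t + 1 - (0 : ℕ) = t + 1 := by norm_num
      rw [harg, harg2, harg3, pow_succ]
      simp only [mul_neg_one, neg_smul, smul_mul_assoc, mul_smul_comm, neg_mul, neg_neg,
        mul_assoc, neg_inj]
    -- split the goal sum
    have hsplit : (∑ k ∈ Finset.Icc (1 : ℤ) (t + 1 - 1),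
          (((-1 : ℝ) ^ (k - 1).toNat •
              ((List.range (k - 1).toNat).map (fun l : ℕ => B (t + 1 - (l : ℤ)))).prod) *
              (A (t + 1 - k + 1) + B (t + 1 - k + 1))) *ᵥ x (t + 1 - k))
        = (A (t + 1) + B (t + 1)) *ᵥ x t
          + ∑ k ∈ Finset.Icc (1 : ℤ) (t - 1),
            (((-1 : ℝ) ^ (k + 1 - 1).toNat •
              ((List.range (k + 1 - 1).toNat).map (fun l : ℕ => B (t + 1 - (l : ℤ)))).prod) *
              (A (t + 1 - (k + 1) + 1) + B (t + 1 - (k + 1) + 1))) *ᵥ x (t + 1 - (k + 1)) := by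
      have h1 : (t + 1 - 1) = t := by ring
      rw [h1]
      have himg : Finset.Icc (1 : ℤ) t
          = Finset.map (addLeftEmbedding 1) (Finset.Icc 0 (t - 1)) := by
        rw [Finset.map_add_left_Icc]; norm_num
      rw [himg, Finset.sum_map]
      simp only [addLeftEmbedding_apply]
      have h0mem : (0 : ℤ) ∈ Finset.Icc (0 : ℤ) (t - 1) := by
        simp; omega
      rw [← Finset.add_sum_erase _ _ h0mem, Finset.Icc_erase_left]
      have hIoc : Finset.Ioc (0 : ℤ) (t - 1) = Finset.Icc 1 (t - 1) := by
        ext z; simp; omega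
      rw [hIoc]
      congr 1
      · norm_num
      · apply Finset.sum_congr rfl
        intro k hk
        have h2 : (1 : ℤ) + k = k + 1 := by ring
        rw [h2]
    rw [hsplit, hx, he, Matrix.mulVec_sub]
    have hsum : B (t + 1) *ᵥ (∑ k ∈ Finset.Icc (1 : ℤ) (t - 1),
          (((-1 : ℝ) ^ (k - 1).toNat •
              ((List.range (k - 1).toNat).map (fun l : ℕ => B (t - (l : ℤ)))).prod) *
              (A (t - k + 1) + B (t - k + 1))) *ᵥ x (t - k))
        = ∑ k ∈ Finset.Icc (1 : ℤ) (t - 1), B (t + 1) *ᵥ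
            ((((-1 : ℝ) ^ (k - 1).toNat •
              ((List.range (k - 1).toNat).map (fun l : ℕ => B (t - (l : ℤ)))).prod) *
              (A (t - k + 1) + B (t - k + 1))) *ᵥ x (t - k)) := by
      rw [← Matrix.mulVecLin_apply, map_sum]
      simp [Matrix.mulVecLin_apply]
    rw [hsum]
    have hterm : ∀ k ∈ Finset.Icc (1 : ℤ) (t - 1),
        (((-1 : ℝ) ^ (k + 1 - 1).toNat •
            ((List.range (k + 1 - 1).toNat).map (fun l : ℕ => B (t + 1 - (l : ℤ)))).prod) *
            (A (t + 1 - (k + 1) + 1) + B (t + 1 - (k + 1) + 1))) *ᵥ x (t + 1 - (k + 1))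
        = -(B (t + 1) *ᵥ
            ((((-1 : ℝ) ^ (k - 1).toNat •
              ((List.range (k - 1).toNat).map (fun l : ℕ => B (t - (l : ℤ)))).prod) *
              (A (t - k + 1) + B (t - k + 1))) *ᵥ x (t - k))) := by
      intro k hk
      have hk1 : 1 ≤ k := (Finset.mem_Icc.1 hk).1
      have h3 : t + 1 - (k + 1) = t - k := by ring
      rw [hkey k hk1, h3, Matrix.neg_mulVec, Matrix.mulVec_mulVec]
    rw [Finset.sum_congr rfl hterm, Matrix.add_mulVec]
    simp only [Finset.sum_neg_distrib]
    abel

/-- Pure autoregressive representation of a tdVARMA(1,1) model started with zero initial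
values: `π_{tk} = ((-1)^{k-1} ∏_{l=0}^{k-2} B_{t-l})(A_{t-k+1} + B_{t-k+1})`. -/
theorem tdVARMA_pure_AR (r : ℕ) (A B : ℤ → Matrix (Fin r) (Fin r) ℝ)
    (x e : ℤ → Fin r → ℝ)
    (hinit : ∀ t : ℤ, t < 1 → x t = 0 ∧ e t = 0)
    (hmodel : ∀ t : ℤ, 1 ≤ t →
      x t = A t *ᵥ x (t - 1) + e t + B t *ᵥ e (t - 1)) :
    ∀ t : ℤ, 1 ≤ t →
      x t = (∑ k ∈ Finset.Icc (1 : ℤ) (t - 1),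
        (((-1 : ℝ) ^ (k - 1).toNat •
            ((List.range (k - 1).toNat).map (fun l => B (t - l))).prod) *
            (A (t - k + 1) + B (t - k + 1))) *ᵥ x (t - k)) + e t := by
  intro t ht
  have h := tdVARMA_aux r A B x e hinit hmodel t ht
  simp only [List.pure_def, List.bind_eq_flatMap, ← List.map_eq_flatMap, List.map_map,
    Function.comp_def]
  exact h
end

section
/- Let Σ_t = g_t Σ g_tᵀ where g_t = [[exp(-η₁₁ sin(ct)), 1],[-1, exp(-η₂₂ sin(ct))]] and Σ = [[s₁₁, s₁₂],[s₁₂, s₂₂]] with s₁₁s₂₂ - s₁₂² > 0. Then tr[Σ_t^{-1} (∂Σ_t/∂η₁₁) Σ_t^{-1} (∂Σ_t/∂η₁₁)] = 2 sin²(ct) · ((e^{η₂₂ sin(ct)} s₁₁ - s₁₂)² + 2(s₁₁s₂₂ - s₁₂²)) / ((1 + e^{(η₁₁+η₂₂) sin(ct)})² (s₁₁s₂₂ - s₁₂²)), and this quantity is nonnegative and bounded uniformly in t. -/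
open Matrix Real

private lemma tpose2 (a b c d : ℝ) : (!![a, b; c, d])ᵀ = !![a, c; b, d] := by
  ext i j
  fin_cases i <;> fin_cases j <;> simp

set_option maxHeartbeats 2000000 in

/-- For `Σ_t = g_t Σ g_tᵀ` with `g_t = [[e^{-η₁₁ sin(ct)}, 1],[-1, e^{-η₂₂ sin(ct)}]]` and
positive definite `Σ = [[s₁₁,s₁₂],[s₁₂,s₂₂]]`, the quantity
`tr[Σ_t⁻¹ (∂Σ_t/∂η₁₁) Σ_t⁻¹ (∂Σ_t/∂η₁₁)]` equals the stated closed form, and it is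
nonnegative and bounded uniformly in `t`. -/
theorem heteroscedastic_trace_formula (η11 η22 c s11 s12 s22 : ℝ)
    (hdet : 0 < s11 * s22 - s12 ^ 2) :
    ∃ C : ℝ, ∀ t : ℝ,
      let g : ℝ → Matrix (Fin 2) (Fin 2) ℝ := fun η =>
        !![Real.exp (-η * Real.sin (c * t)), 1; -1, Real.exp (-η22 * Real.sin (c * t))]
      let S : Matrix (Fin 2) (Fin 2) ℝ := !![s11, s12; s12, s22]
      let St : ℝ → Matrix (Fin 2) (Fin 2) ℝ := fun η => g η * S * (g η)ᵀ
      let D : Matrix (Fin 2) (Fin 2) ℝ :=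
        Matrix.of fun i j => deriv (fun η => St η i j) η11
      let V : ℝ := ((St η11)⁻¹ * D * (St η11)⁻¹ * D).trace
      V = 2 * Real.sin (c * t) ^ 2 *
            ((Real.exp (η22 * Real.sin (c * t)) * s11 - s12) ^ 2 +
              2 * (s11 * s22 - s12 ^ 2)) /
          ((1 + Real.exp ((η11 + η22) * Real.sin (c * t))) ^ 2 *
            (s11 * s22 - s12 ^ 2)) ∧
      0 ≤ V ∧ V ≤ C := by
  refine ⟨2 * ((Real.exp |η22| * |s11| + |s12|) ^ 2 + 2 * (s11 * s22 - s12 ^ 2)) /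
      (s11 * s22 - s12 ^ 2), fun t => ?_⟩
  dsimp only
  set s := Real.sin (c * t) with hs
  set A := Real.exp (-η11 * s) with hA
  set B := Real.exp (-η22 * s) with hB
  have hA0 : 0 < A := Real.exp_pos _
  have hB0 : 0 < B := Real.exp_pos _
  -- closed form for the product g η * S * (g η)ᵀ
  have hprod : ∀ x : ℝ, !![x, 1; -1, B] * !![s11, s12; s12, s22] * !![x, 1; -1, B]ᵀ =
      !![x*x*s11 + 2*x*s12 + s22, -x*s11 + x*B*s12 - s12 + B*s22;
         -x*s11 + x*B*s12 - s12 + B*s22, s11 - 2*B*s12 + B^2*s22] := by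
    intro x
    rw [tpose2, Matrix.mul_fin_two, Matrix.mul_fin_two]
    ext i j
    fin_cases i <;> fin_cases j <;> · simp; ring
  -- derivative of η ↦ exp (-η s)
  have hE : HasDerivAt (fun η : ℝ => Real.exp (-η * s)) (-s * A) η11 := by
    have h : HasDerivAt (fun η : ℝ => -η * s) (-1 * s) η11 :=
      (hasDerivAt_id η11).neg.mul_const s
    have h2 := h.exp
    rw [hA]
    convert h2 using 1
    ring
  -- entrywise derivatives
  have d00 : deriv (fun η => (!![Real.exp (-η * s), 1; -1, B] * !![s11, s12; s12, s22] *
      !![Real.exp (-η * s), 1; -1, B]ᵀ) 0 0) η11 = -2*s*(A^2*s11 + A*s12) := by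
    have hfun : (fun η => (!![Real.exp (-η * s), 1; -1, B] * !![s11, s12; s12, s22] *
        !![Real.exp (-η * s), 1; -1, B]ᵀ) 0 0) =
        fun η => Real.exp (-η * s) * Real.exp (-η * s) * s11 +
          2 * Real.exp (-η * s) * s12 + s22 := by
      funext η
      rw [hprod]
      simp
    rw [hfun]
    have h := (((hE.mul hE).mul_const s11).add
      (((hE.const_mul (2:ℝ)).mul_const s12))).add_const s22
    exact h.deriv.trans (by ring)
  have d01 : deriv (fun η => (!![Real.exp (-η * s), 1; -1, B] * !![s11, s12; s12, s22] *
      !![Real.exp (-η * s), 1; -1, B]ᵀ) 0 1) η11 = s*A*(s11 - B*s12) := by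
    have hfun : (fun η => (!![Real.exp (-η * s), 1; -1, B] * !![s11, s12; s12, s22] *
        !![Real.exp (-η * s), 1; -1, B]ᵀ) 0 1) =
        fun η => Real.exp (-η * s) * (-s11 + B*s12) + (-s12 + B*s22) := by
      funext η
      rw [hprod]
      simp
      ring
    rw [hfun]
    have h := (hE.mul_const (-s11 + B*s12)).add_const (-s12 + B*s22)
    rw [h.deriv]; ring
  have d10 : deriv (fun η => (!![Real.exp (-η * s), 1; -1, B] * !![s11, s12; s12, s22] *
      !![Real.exp (-η * s), 1; -1, B]ᵀ) 1 0) η11 = s*A*(s11 - B*s12) := by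
    have hfun : (fun η => (!![Real.exp (-η * s), 1; -1, B] * !![s11, s12; s12, s22] *
        !![Real.exp (-η * s), 1; -1, B]ᵀ) 1 0) =
        fun η => Real.exp (-η * s) * (-s11 + B*s12) + (-s12 + B*s22) := by
      funext η
      rw [hprod]
      simp
      ring
    rw [hfun]
    have h := (hE.mul_const (-s11 + B*s12)).add_const (-s12 + B*s22)
    rw [h.deriv]; ring
  have d11 : deriv (fun η => (!![Real.exp (-η * s), 1; -1, B] * !![s11, s12; s12, s22] *
      !![Real.exp (-η * s), 1; -1, B]ᵀ) 1 1) η11 = 0 := by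
    have hfun : (fun η => (!![Real.exp (-η * s), 1; -1, B] * !![s11, s12; s12, s22] *
        !![Real.exp (-η * s), 1; -1, B]ᵀ) 1 1) =
        fun _ => s11 - 2*B*s12 + B^2*s22 := by
      funext η
      rw [hprod]
      simp
    rw [hfun, deriv_const]
  have hD : (Matrix.of fun i j =>
      deriv (fun η =>
        (!![Real.exp (-η * s), 1; -1, B] * !![s11, s12; s12, s22] *
          !![Real.exp (-η * s), 1; -1, B]ᵀ) i j) η11) =
      !![-2*s*(A^2*s11 + A*s12), s*A*(s11 - B*s12); s*A*(s11 - B*s12), 0] := by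
    ext i j
    fin_cases i <;> fin_cases j
    · exact d00
    · exact d01
    · exact d10
    · exact d11
  -- inverse of Σ_t
  have hdetne : s11 * s22 - s12 ^ 2 ≠ 0 := ne_of_gt hdet
  have hABne : A * B + 1 ≠ 0 := by positivity
  have hMdet : (!![A*A*s11 + 2*A*s12 + s22, -A*s11 + A*B*s12 - s12 + B*s22;
      -A*s11 + A*B*s12 - s12 + B*s22, s11 - 2*B*s12 + B^2*s22] : Matrix (Fin 2) (Fin 2) ℝ).det
      = (A*B+1)^2 * (s11*s22 - s12^2) := by
    rw [Matrix.det_fin_two_of]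
    ring
  have hMinv : (!![A*A*s11 + 2*A*s12 + s22, -A*s11 + A*B*s12 - s12 + B*s22;
      -A*s11 + A*B*s12 - s12 + B*s22, s11 - 2*B*s12 + B^2*s22] : Matrix (Fin 2) (Fin 2) ℝ)⁻¹
      = ((A*B+1)^2 * (s11*s22 - s12^2))⁻¹ •
        !![s11 - 2*B*s12 + B^2*s22, -(-A*s11 + A*B*s12 - s12 + B*s22);
           -(-A*s11 + A*B*s12 - s12 + B*s22), A*A*s11 + 2*A*s12 + s22] := by
    rw [Matrix.inv_def, hMdet, Matrix.adjugate_fin_two, Ring.inverse_eq_inv']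
    congr 1
  have hexpB : Real.exp (η22 * s) = B⁻¹ := by
    rw [hB, ← Real.exp_neg]
    congr 1
    ring
  have hexpAB : Real.exp ((η11 + η22) * s) = A⁻¹ * B⁻¹ := by
    rw [hA, hB, ← Real.exp_neg, ← Real.exp_neg, ← Real.exp_add]
    congr 1
    ring
  rw [hprod A, hD, hMinv, hexpB, hexpAB]
  have hABinvne : (1 : ℝ) + A⁻¹ * B⁻¹ ≠ 0 := by positivity
  have hV : ((((A*B+1)^2 * (s11*s22 - s12^2))⁻¹ •
        !![s11 - 2*B*s12 + B^2*s22, -(-A*s11 + A*B*s12 - s12 + B*s22);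
           -(-A*s11 + A*B*s12 - s12 + B*s22), A*A*s11 + 2*A*s12 + s22] *
        !![-2*s*(A^2*s11 + A*s12), s*A*(s11 - B*s12); s*A*(s11 - B*s12), 0] *
        (((A*B+1)^2 * (s11*s22 - s12^2))⁻¹ •
        !![s11 - 2*B*s12 + B^2*s22, -(-A*s11 + A*B*s12 - s12 + B*s22);
           -(-A*s11 + A*B*s12 - s12 + B*s22), A*A*s11 + 2*A*s12 + s22]) *
        !![-2*s*(A^2*s11 + A*s12), s*A*(s11 - B*s12); s*A*(s11 - B*s12), 0]).trace : ℝ)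
      = 2 * s ^ 2 * ((B⁻¹ * s11 - s12) ^ 2 + 2 * (s11 * s22 - s12 ^ 2)) /
          ((1 + A⁻¹ * B⁻¹) ^ 2 * (s11 * s22 - s12 ^ 2)) := by
    simp only [Matrix.smul_mul, Matrix.mul_smul, Matrix.trace_smul, smul_eq_mul,
      Matrix.mul_fin_two, Matrix.trace_fin_two_of]
    field_simp
    ring
  rw [hV]
  refine ⟨rfl, ?_, ?_⟩
  · apply div_nonneg
    · have h1 : (0:ℝ) ≤ (B⁻¹ * s11 - s12) ^ 2 := sq_nonneg _
      nlinarith [sq_nonneg s, sq_nonneg (s * (B⁻¹ * s11 - s12)), hdet, sq_nonneg (B⁻¹ * s11 - s12)]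
    · have h2 : (0:ℝ) < 1 + A⁻¹ * B⁻¹ := by positivity
      nlinarith [hdet]
  · apply div_le_div₀
    · nlinarith [hdet, sq_nonneg (Real.exp |η22| * |s11| + |s12|)]
    · have hs2 : s ^ 2 ≤ 1 := by rw [hs]; exact Real.sin_sq_le_one _
      have habs : |B⁻¹ * s11 - s12| ≤ Real.exp |η22| * |s11| + |s12| := by
        have h1 : |B⁻¹ * s11 - s12| ≤ |B⁻¹ * s11| + |s12| := abs_sub _ _
        have h2 : |B⁻¹| = Real.exp (η22 * s) := by
          rw [← hexpB]; exact abs_of_pos (Real.exp_pos _)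
        have h3 : Real.exp (η22 * s) ≤ Real.exp |η22| := by
          apply Real.exp_le_exp.2
          calc η22 * s ≤ |η22 * s| := le_abs_self _
            _ = |η22| * |s| := abs_mul _ _
            _ ≤ |η22| * 1 := by
                apply mul_le_mul_of_nonneg_left _ (abs_nonneg _)
                rw [hs]; exact abs_sin_le_one _  -- check name
            _ = |η22| := mul_one _
        calc |B⁻¹ * s11 - s12| ≤ |B⁻¹ * s11| + |s12| := h1
          _ = |B⁻¹| * |s11| + |s12| := by rw [abs_mul]
          _ ≤ Real.exp |η22| * |s11| + |s12| := by
              rw [h2]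
              exact add_le_add_left (mul_le_mul_of_nonneg_right h3 (abs_nonneg _)) _
      have hsq : (B⁻¹ * s11 - s12) ^ 2 ≤ (Real.exp |η22| * |s11| + |s12|) ^ 2 := by
        rw [← sq_abs (B⁻¹ * s11 - s12)]
        exact pow_le_pow_left₀ (abs_nonneg _) habs 2
      nlinarith [sq_nonneg s, sq_nonneg (B⁻¹ * s11 - s12), hdet,
        sq_nonneg (Real.exp |η22| * |s11| + |s12|)]
    · exact hdet
    · have hE0 : (0:ℝ) < A⁻¹ * B⁻¹ := by positivity
      have h1 : (1:ℝ) ≤ (1 + A⁻¹ * B⁻¹) ^ 2 := by nlinarith [hE0, sq_nonneg (A⁻¹ * B⁻¹)]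
      calc s11 * s22 - s12 ^ 2 = 1 * (s11 * s22 - s12 ^ 2) := (one_mul _).symm
        _ ≤ (1 + A⁻¹ * B⁻¹) ^ 2 * (s11 * s22 - s12 ^ 2) :=
            mul_le_mul_of_nonneg_right h1 hdet.le
end
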